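/- Let G be a finite connected simple graph with n vertices and m edges, q : D(G) → ℍ a map, U the quaternionic transition matrix determined by q, and W, D_w the quaternionic weighted matrix and weighted degree matrix with weight w = q. Then for every λ ∈ ℂ, det(λ·I_{4m} − ψ(U)) = (λ² − 1)^{2m−2n} · det(λ²·I_{2n} − λ·ψ(ᵀW) + ψ(D_w) − I_{2n}). -/

import Mathlib

noncomputable section

open Matrix

/-- Simplex part of a quaternion: `q = Sc q + j * Pc q`. -/
def Sc (q : Quaternion ℝ) : ℂ := ⟨q.re, q.imI⟩

/-- Perplex part of a quaternion: `q = Sc q + j * Pc q`. -/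
def Pc (q : Quaternion ℝ) : ℂ := ⟨q.imJ, -q.imK⟩

/-- The map ψ sending a quaternionic matrix `M = M^S + j·M^P` (symplectic decomposition)
to the complex block matrix `[[M^S, -conj(M^P)], [M^P, conj(M^S)]]`. -/
def psi {I J : Type*} (M : Matrix I J (Quaternion ℝ)) :
    Matrix (I ⊕ I) (J ⊕ J) ℂ :=
  Matrix.fromBlocks (M.map Sc) (-((M.map Pc).map (starRingEnd ℂ)))
    (M.map Pc) ((M.map Sc).map (starRingEnd ℂ))

variable {V : Type*}

/-- The quaternionic weighted matrix W: `W u v = w((u,v))` if `(u,v)` is an arc, else 0. -/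
def quatWeightMatrix [Fintype V] [DecidableEq V] (G : SimpleGraph V) [DecidableRel G.Adj]
    (w : G.Dart → Quaternion ℝ) : Matrix V V (Quaternion ℝ) := fun u v =>
  if h : G.Adj u v then w ⟨(u, v), h⟩ else 0

/-- The quaternionic weighted arc matrix B_w: `(B_w) e f = w(f)` if `t(e) = o(f)`, else 0. -/
def quatArcMatrix [Fintype V] [DecidableEq V] (G : SimpleGraph V) [DecidableRel G.Adj]
    (w : G.Dart → Quaternion ℝ) : Matrix G.Dart G.Dart (Quaternion ℝ) := fun e f =>
  if e.toProd.2 = f.toProd.1 then w f else 0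

/-- The quaternionic arc-inversion matrix J₀: `(J₀) e f = 1` if `f = e⁻¹`, else 0. -/
def quatArcInvMatrix [Fintype V] [DecidableEq V] (G : SimpleGraph V) [DecidableRel G.Adj] :
    Matrix G.Dart G.Dart (Quaternion ℝ) := fun e f =>
  if f = e.symm then 1 else 0

/-- The quaternionic weighted degree matrix D_w: diagonal with
`(D_w)_{uu} = Σ_{e : o(e) = u} w(e)`. -/
def quatDegMatrix [Fintype V] [DecidableEq V] (G : SimpleGraph V) [DecidableRel G.Adj]
    (w : G.Dart → Quaternion ℝ) : Matrix V V (Quaternion ℝ) :=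
  Matrix.diagonal fun u => ∑ e : G.Dart, if e.toProd.1 = u then w e else 0

/-- The 2m×n matrix K: `K e v = w(e)` if `o(e) = v`, else 0. -/
def quatKMatrix [Fintype V] [DecidableEq V] (G : SimpleGraph V) [DecidableRel G.Adj]
    (w : G.Dart → Quaternion ℝ) : Matrix G.Dart V (Quaternion ℝ) := fun e v =>
  if e.toProd.1 = v then w e else 0

/-- The 2m×n matrix L: `L e v = 1` if `t(e) = v`, else 0. -/
def quatLMatrix [Fintype V] [DecidableEq V] (G : SimpleGraph V) [DecidableRel G.Adj] :
    Matrix G.Dart V (Quaternion ℝ) := fun e v =>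
  if e.toProd.2 = v then 1 else 0

/-- The quaternionic transition matrix determined by `q : D(G) → ℍ`:
`U e f = q(e)` if `t(f) = o(e)` and `f ≠ e⁻¹`, `U e f = q(e) − 1` if `f = e⁻¹`,
`0` otherwise. -/
def quatTransition [Fintype V] [DecidableEq V] (G : SimpleGraph V) [DecidableRel G.Adj]
    (q : G.Dart → Quaternion ℝ) : Matrix G.Dart G.Dart (Quaternion ℝ) := fun e f =>
  if f = e.symm then q e - 1
  else if f.toProd.2 = e.toProd.1 then q e else 0


/-! ### Auxiliary lemmas -/

lemma Sc_add (a b : Quaternion ℝ) : Sc (a + b) = Sc a + Sc b := by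
  apply Complex.ext <;> simp [Sc]

lemma Pc_add (a b : Quaternion ℝ) : Pc (a + b) = Pc a + Pc b := by
  apply Complex.ext <;> simp [Pc] <;> ring

lemma Sc_sub (a b : Quaternion ℝ) : Sc (a - b) = Sc a - Sc b := by
  apply Complex.ext <;> simp [Sc]

lemma Pc_sub (a b : Quaternion ℝ) : Pc (a - b) = Pc a - Pc b := by
  apply Complex.ext <;> simp [Pc] <;> ring

@[simp] lemma Sc_zero : Sc 0 = 0 := by apply Complex.ext <;> simp [Sc, Quaternion.re_zero, Quaternion.imI_zero]
@[simp] lemma Pc_zero : Pc 0 = 0 := by apply Complex.ext <;> simp [Pc, Quaternion.imJ_zero, Quaternion.imK_zero]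
@[simp] lemma Sc_one : Sc 1 = 1 := by apply Complex.ext <;> simp [Sc, Quaternion.re_one, Quaternion.imI_one]
@[simp] lemma Pc_one : Pc 1 = 0 := by apply Complex.ext <;> simp [Pc, Quaternion.imJ_one, Quaternion.imK_one]

lemma Sc_mul (a b : Quaternion ℝ) :
    Sc (a * b) = Sc a * Sc b - (starRingEnd ℂ) (Pc a) * Pc b := by
  apply Complex.ext <;>
    simp [Sc, Pc, Complex.mul_re, Complex.mul_im, Quaternion.re_mul, Quaternion.imI_mul] <;> ring

lemma Pc_mul (a b : Quaternion ℝ) :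
    Pc (a * b) = (starRingEnd ℂ) (Sc a) * Pc b + Pc a * Sc b := by
  apply Complex.ext <;>
    simp [Sc, Pc, Complex.mul_re, Complex.mul_im, Quaternion.imJ_mul, Quaternion.imK_mul] <;> ring


lemma Sc_sum {ι : Type*} (s : Finset ι) (f : ι → Quaternion ℝ) :
    Sc (∑ i ∈ s, f i) = ∑ i ∈ s, Sc (f i) :=
  map_sum (⟨⟨Sc, Sc_zero⟩, Sc_add⟩ : Quaternion ℝ →+ ℂ) f s

lemma Pc_sum {ι : Type*} (s : Finset ι) (f : ι → Quaternion ℝ) :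
    Pc (∑ i ∈ s, f i) = ∑ i ∈ s, Pc (f i) :=
  map_sum (⟨⟨Pc, Pc_zero⟩, Pc_add⟩ : Quaternion ℝ →+ ℂ) f s

lemma psi_sub {I J : Type*} (M N : Matrix I J (Quaternion ℝ)) :
    psi (M - N) = psi M - psi N := by
  ext (i|i) (j|j) <;>
    simp [psi, Sc_sub, Pc_sub, map_sub] <;> ring

lemma psi_one {I : Type*} [DecidableEq I] : psi (1 : Matrix I I (Quaternion ℝ)) = 1 := by
  ext (i|i) (j|j) <;>
    simp [psi, Matrix.one_apply, apply_ite Sc, apply_ite Pc, apply_ite (starRingEnd ℂ)]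

lemma psi_mul {I J K : Type*} [Fintype J] (M : Matrix I J (Quaternion ℝ))
    (N : Matrix J K (Quaternion ℝ)) : psi (M * N) = psi M * psi N := by
  ext (i|i) (k|k) <;>
  · simp only [psi, Matrix.mul_apply, Matrix.fromBlocks_apply₁₁, Matrix.fromBlocks_apply₁₂,
      Matrix.fromBlocks_apply₂₁, Matrix.fromBlocks_apply₂₂, Matrix.map_apply, Matrix.neg_apply,
      Fintype.sum_sum_type, Sc_sum, Pc_sum, map_sum, ← Finset.sum_neg_distrib,
      ← Finset.sum_add_distrib]
    refine Finset.sum_congr rfl fun j _ => ?_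
    simp only [Sc_mul, Pc_mul, _root_.map_mul, map_sub, map_add, Complex.conj_conj]
    ring


lemma psi_zero {I J : Type*} : psi (0 : Matrix I J (Quaternion ℝ)) = 0 := by
  ext (i|i) (j|j) <;> simp [psi]


set_option maxHeartbeats 1000000 in
lemma core_det {α β : Type*} [Fintype α] [Fintype β] [DecidableEq α] [DecidableEq β]
    (A : Matrix α β ℂ) (B : Matrix β α ℂ) (J : Matrix α α ℂ) (lam : ℂ) (p : ℕ)
    (hJ : J * J = 1) (hα : Fintype.card α = p + p)
    (hdet : (lam • (1 : Matrix α α ℂ) - J).det = (lam ^ 2 - 1) ^ p)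
    (hne : lam ^ 2 - 1 ≠ 0) :
    (lam ^ 2 - 1) ^ (Fintype.card β) * (lam • 1 - (A * B - J)).det =
      (lam ^ 2 - 1) ^ p * ((lam ^ 2 - 1) • 1 - lam • (B * A) + B * (J * A)).det := by
  set μ : ℂ := lam ^ 2 - 1 with hμ
  have hμp : μ ^ p ≠ 0 := pow_ne_zero _ hne
  have key1 : (lam • 1 - (A * B - J)) * (lam • 1 - J) = μ • 1 + A * (B * J - lam • B) := by
    simp only [sub_mul, mul_sub, Matrix.sub_mul, Matrix.mul_sub, smul_mul_assoc,
      mul_smul_comm, Matrix.smul_mul, Matrix.mul_smul, mul_one, one_mul, Matrix.mul_one,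
      Matrix.one_mul, hJ, smul_sub, smul_smul, Matrix.mul_assoc]
    rw [hμ, sub_smul, one_smul, ← pow_two]
    abel
  have key2 : ∀ C : Matrix β α ℂ,
      μ ^ (Fintype.card β) * (μ • 1 + A * C).det = μ ^ (Fintype.card α) * (μ • 1 + C * A).det := by
    intro C
    have e1 : μ • (1 : Matrix α α ℂ) + A * C = μ • (1 + A * (μ⁻¹ • C)) := by
      rw [smul_add, Matrix.mul_smul, smul_smul, mul_inv_cancel₀ hne, one_smul]
    have e2 : μ • (1 : Matrix β β ℂ) + C * A = μ • (1 + (μ⁻¹ • C) * A) := by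
      rw [smul_add, Matrix.smul_mul, smul_smul, mul_inv_cancel₀ hne, one_smul]
    rw [e1, e2, Matrix.det_smul, Matrix.det_smul, Matrix.det_one_add_mul_comm]
    ring
  have key3 := congrArg Matrix.det key1
  rw [Matrix.det_mul, hdet] at key3
  have key4 := key2 (B * J - lam • B)
  rw [← key3, hα, pow_add] at key4
  have harr : μ • (1 : Matrix β β ℂ) + (B * J - lam • B) * A =
      μ • 1 - lam • (B * A) + B * (J * A) := by
    rw [Matrix.sub_mul, Matrix.smul_mul, Matrix.mul_assoc]
    abel
  rw [harr] at key4
  have hms : μ • (1 : Matrix β β ℂ) = μ • 1 := rfl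
  apply mul_left_cancel₀ hμp
  calc μ ^ p * ((lam ^ 2 - 1) ^ Fintype.card β * (lam • 1 - (A * B - J)).det)
      = (lam ^ 2 - 1) ^ Fintype.card β * ((lam • 1 - (A * B - J)).det * μ ^ p) := by ring
    _ = μ ^ p * μ ^ p * (μ • 1 - lam • (B * A) + B * (J * A)).det := key4
    _ = μ ^ p * ((lam ^ 2 - 1) ^ p * ((lam ^ 2 - 1) • 1 - lam • (B * A) + B * (J * A)).det) := by
        rw [hμ]; ring


section DetJ

variable [Fintype V] [DecidableEq V] (G : SimpleGraph V) [DecidableRel G.Adj]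

/-- complex arc-inversion matrix -/
def Jcx : Matrix G.Dart G.Dart ℂ := Matrix.of fun e f => if f = e.symm then (1 : ℂ) else 0

@[simp] lemma Jcx_apply (e f : G.Dart) : Jcx G e f = if f = e.symm then (1 : ℂ) else 0 := rfl

/-- det over one copy: the complex arc-inversion matrix. -/
lemma det_lam_sub_Jc (lam : ℂ) :
    ((lam • (1 : Matrix G.Dart G.Dart ℂ) - Jcx G).det) ^ 2
      = (lam ^ 2 - 1) ^ (Fintype.card G.Dart) := by
  classical
  set Jc : Matrix G.Dart G.Dart ℂ := Jcx G with hJc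
  let fV := Fintype.equivFin V
  let S := {e : G.Dart // fV e.toProd.1 < fV e.toProd.2}
  have hflip : ∀ e : G.Dart, ¬ fV e.toProd.1 < fV e.toProd.2 →
      fV e.symm.toProd.1 < fV e.symm.toProd.2 := by
    intro e h
    have hne : fV e.toProd.2 ≠ fV e.toProd.1 := fun hh =>
      e.adj.ne' (fV.injective hh)
    simp only [SimpleGraph.Dart.symm_toProd, Prod.fst_swap, Prod.snd_swap]
    exact lt_of_le_of_ne (not_lt.mp h) hne
  have hnotS : ∀ a : S, ¬ fV (a : G.Dart).symm.toProd.1 < fV (a : G.Dart).symm.toProd.2 := by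
    intro a
    simp only [SimpleGraph.Dart.symm_toProd, Prod.fst_swap, Prod.snd_swap]
    exact asymm a.2
  let σ : S ⊕ S ≃ G.Dart :=
    { toFun := Sum.elim (fun a => (a : G.Dart)) (fun a => (a : G.Dart).symm)
      invFun := fun e =>
        if h : fV e.toProd.1 < fV e.toProd.2 then Sum.inl ⟨e, h⟩
        else Sum.inr ⟨e.symm, hflip e h⟩
      left_inv := by
        rintro (a | a)
        · simp only [Sum.elim_inl]
          exact dif_pos a.2
        · simp only [Sum.elim_inr]
          refine (dif_neg (hnotS a)).trans ?_
          simp [SimpleGraph.Dart.symm_symm]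
      right_inv := by
        intro e
        by_cases h : fV e.toProd.1 < fV e.toProd.2
        · simp [h]
        · simp [h] }
  have hcard : Fintype.card G.Dart = Fintype.card S + Fintype.card S := by
    rw [← Fintype.card_congr σ, Fintype.card_sum]
  have σl : ∀ a : S, σ (Sum.inl a) = (a : G.Dart) := fun a => rfl
  have σr : ∀ a : S, σ (Sum.inr a) = (a : G.Dart).symm := fun a => rfl
  have hinj : Function.Injective (SimpleGraph.Dart.symm : G.Dart → G.Dart) :=
    SimpleGraph.Dart.symm_involutive.injective
  have hre : (lam • (1 : Matrix G.Dart G.Dart ℂ) - Jc).submatrix σ σ =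
      fromBlocks (lam • 1) (-1) (-1) (lam • 1) := by
    ext x y
    have entry : ∀ e f : G.Dart, (lam • (1 : Matrix G.Dart G.Dart ℂ) - Jc) e f
        = lam * (if e = f then 1 else 0) - (if f = e.symm then 1 else 0) := by
      intro e f
      simp [hJc, Matrix.one_apply, Matrix.sub_apply, Matrix.smul_apply]
    cases x with
    | inl a =>
      cases y with
      | inl b =>
        have h1 : ¬ ((b : G.Dart) = (a : G.Dart).symm) :=
          fun h => hnotS a (by rw [← h]; exact b.2)
        simp only [submatrix_apply, σl, entry, if_neg h1, sub_zero,
          fromBlocks_apply₁₁, Matrix.smul_apply, Matrix.one_apply, smul_eq_mul,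
          Subtype.coe_inj]
      | inr b =>
        have h1 : ¬ ((a : G.Dart) = (b : G.Dart).symm) :=
          fun h => hnotS b (by rw [← h]; exact a.2)
        simp only [submatrix_apply, σl, σr, entry, if_neg h1, mul_zero, zero_sub,
          fromBlocks_apply₁₂, Matrix.neg_apply, Matrix.one_apply]
        by_cases hab : a = b
        · subst hab; simp
        · have h2 : ¬ ((b : G.Dart).symm = (a : G.Dart).symm) :=
            fun h => hab (Subtype.coe_inj.mp (hinj h)).symm
          simp [if_neg h2, if_neg hab]
    | inr a =>
      cases y with
      | inl b =>
        have h1 : ¬ ((a : G.Dart).symm = (b : G.Dart)) :=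
          fun h => hnotS a (by rw [h]; exact b.2)
        simp only [submatrix_apply, σl, σr, entry, SimpleGraph.Dart.symm_symm,
          if_neg h1, mul_zero, zero_sub,
          fromBlocks_apply₂₁, Matrix.neg_apply, Matrix.one_apply]
        by_cases hab : a = b
        · subst hab; simp
        · have h2 : ¬ ((b : G.Dart) = (a : G.Dart)) :=
            fun h => hab (Subtype.coe_inj.mp h).symm
          simp [if_neg h2, if_neg hab]
      | inr b =>
        have h1 : ¬ ((b : G.Dart).symm = (a : G.Dart)) :=
          fun h => hnotS b (by rw [h]; exact a.2)
        simp only [submatrix_apply, σr, entry, SimpleGraph.Dart.symm_symm,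
          if_neg h1, sub_zero,
          fromBlocks_apply₂₂, Matrix.smul_apply, Matrix.one_apply, smul_eq_mul,
          hinj.eq_iff, Subtype.coe_inj]
  have hdet1 : (lam • (1 : Matrix G.Dart G.Dart ℂ) - Jc).det =
      (fromBlocks (lam • (1 : Matrix S S ℂ)) (-1) (-1) (lam • (1 : Matrix S S ℂ))).det := by
    rw [← hre, Matrix.det_submatrix_equiv_self]
  have hfac : fromBlocks (lam • (1 : Matrix S S ℂ)) (-1) (-1) (lam • (1 : Matrix S S ℂ)) =
      fromBlocks (0 : Matrix S S ℂ) (-1) (-1) (0 : Matrix S S ℂ) *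
        fromBlocks (1 : Matrix S S ℂ) (-(lam • (1 : Matrix S S ℂ)))
          (-(lam • (1 : Matrix S S ℂ))) (1 : Matrix S S ℂ) := by
    rw [fromBlocks_multiply]
    simp [Matrix.neg_mul, Matrix.mul_neg]
  have hd2 : fromBlocks (0 : Matrix S S ℂ) (-1) (-1) (0 : Matrix S S ℂ) *
      fromBlocks (0 : Matrix S S ℂ) (-1) (-1) (0 : Matrix S S ℂ) = 1 := by
    rw [fromBlocks_multiply]
    simp [← fromBlocks_one]
  have hdetd : (fromBlocks (0 : Matrix S S ℂ) (-1) (-1) (0 : Matrix S S ℂ)).det *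
      (fromBlocks (0 : Matrix S S ℂ) (-1) (-1) (0 : Matrix S S ℂ)).det = 1 := by
    rw [← Matrix.det_mul, hd2, Matrix.det_one]
  have hdet2 : (fromBlocks (1 : Matrix S S ℂ) (-(lam • (1 : Matrix S S ℂ)))
      (-(lam • (1 : Matrix S S ℂ))) (1 : Matrix S S ℂ)).det =
      (1 - lam ^ 2) ^ (Fintype.card S) := by
    rw [Matrix.det_fromBlocks_one₁₁]
    have : (1 : Matrix S S ℂ) - -(lam • 1) * -(lam • 1) = (1 - lam ^ 2) • 1 := by
      rw [Matrix.neg_mul, Matrix.mul_neg, neg_neg, Matrix.smul_mul, Matrix.mul_smul,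
        smul_smul, Matrix.one_mul, sub_smul, one_smul, ← pow_two]
    rw [this, Matrix.det_smul, Matrix.det_one, mul_one]
  rw [hdet1, hfac, Matrix.det_mul, hdet2]
  rw [mul_pow, pow_two, hdetd, one_mul, ← pow_mul, hcard]
  rw [show Fintype.card S * 2 = Fintype.card S + Fintype.card S by ring]
  rw [← neg_sub (lam ^ 2) 1]
  rw [Even.neg_pow ⟨Fintype.card S, rfl⟩]

lemma psi_arcInv : psi (quatArcInvMatrix G) =
    fromBlocks (Jcx G) 0 0 (Jcx G) := by
  ext (e|e) (f|f) <;>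
    simp [psi, quatArcInvMatrix, apply_ite Sc, apply_ite Pc, apply_ite (starRingEnd ℂ)]

lemma det_psi_arcInv (lam : ℂ) :
    (lam • (1 : Matrix (G.Dart ⊕ G.Dart) (G.Dart ⊕ G.Dart) ℂ) - psi (quatArcInvMatrix G)).det
      = (lam ^ 2 - 1) ^ (Fintype.card G.Dart) := by
  classical
  rw [psi_arcInv]
  have h1 : lam • (1 : Matrix (G.Dart ⊕ G.Dart) (G.Dart ⊕ G.Dart) ℂ) -
      fromBlocks (Jcx G) 0 0 (Jcx G) =
      fromBlocks (lam • (1 : Matrix G.Dart G.Dart ℂ) - Jcx G) 0 0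
        (lam • (1 : Matrix G.Dart G.Dart ℂ) - Jcx G) := by
    rw [← fromBlocks_one, Matrix.fromBlocks_smul]
    ext (i|i) (j|j) <;> simp
  rw [h1, Matrix.det_fromBlocks_zero₂₁, ← pow_two]
  exact det_lam_sub_Jc G lam

end DetJ

section GraphIds
variable [Fintype V] [DecidableEq V] (G : SimpleGraph V) [DecidableRel G.Adj]
  (q : G.Dart → Quaternion ℝ)

lemma transition_eq :
    quatTransition G q = quatKMatrix G q * (quatLMatrix G)ᵀ - quatArcInvMatrix G := by
  apply Matrix.ext; intro e f
  simp only [Matrix.sub_apply, Matrix.mul_apply, Matrix.transpose_apply, quatTransition,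
    quatKMatrix, quatLMatrix, quatArcInvMatrix]
  have hterm : ∀ v : V, (if e.toProd.1 = v then q e else 0) *
      (if f.toProd.2 = v then (1 : Quaternion ℝ) else 0)
      = if e.toProd.1 = v then (if f.toProd.2 = v then q e else 0) else 0 := by
    intro v
    split_ifs <;> simp
  rw [Finset.sum_congr rfl fun v _ => hterm v, Finset.sum_ite_eq]
  simp only [Finset.mem_univ, if_true]
  by_cases hf : f = e.symm
  · subst hf
    simp [SimpleGraph.Dart.symm_toProd]
  · rw [if_neg hf]
    split_ifs <;> simp

lemma weight_eq :
    (quatLMatrix G)ᵀ * quatKMatrix G q = (quatWeightMatrix G q)ᵀ := by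
  apply Matrix.ext; intro u v
  simp only [Matrix.mul_apply, Matrix.transpose_apply, quatLMatrix, quatKMatrix,
    quatWeightMatrix]
  by_cases h : G.Adj v u
  · rw [Finset.sum_eq_single (⟨(v, u), h⟩ : G.Dart)]
    · simp [h]
    · intro e _ hne
      split_ifs with h1 h2
      · exact absurd (SimpleGraph.Dart.ext e ⟨(v, u), h⟩ (Prod.ext h2 h1)) hne
      · simp
      · simp
      · simp
    · exact fun he => absurd (Finset.mem_univ _) he
  · rw [dif_neg h]
    apply Finset.sum_eq_zero
    intro e _
    split_ifs with h1 h2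
    · exact absurd (h2 ▸ h1 ▸ e.adj) h
    · simp
    · simp
    · simp

lemma deg_eq :
    (quatLMatrix G)ᵀ * (quatArcInvMatrix G * quatKMatrix G q) = quatDegMatrix G q := by
  have hJK : quatArcInvMatrix G * quatKMatrix G q =
      Matrix.of (fun (e : G.Dart) (v : V) =>
        if e.toProd.2 = v then q e.symm else 0) := by
    apply Matrix.ext; intro e v
    simp only [Matrix.mul_apply, quatArcInvMatrix, quatKMatrix, Matrix.of_apply]
    rw [Finset.sum_congr rfl (fun f _ => by
      rw [ite_mul, one_mul, zero_mul] :
        ∀ f ∈ Finset.univ, (if f = e.symm then (1:Quaternion ℝ) else 0) *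
          (if f.toProd.1 = v then q f else 0)
          = if f = e.symm then (if f.toProd.1 = v then q f else 0) else 0)]
    rw [Finset.sum_ite_eq']
    simp [SimpleGraph.Dart.symm_toProd]
  rw [hJK]
  apply Matrix.ext; intro u v
  simp only [Matrix.mul_apply, Matrix.transpose_apply, quatLMatrix, quatDegMatrix,
    Matrix.of_apply]
  by_cases huv : u = v
  · subst huv
    rw [Matrix.diagonal_apply_eq]
    have : ∀ e : G.Dart, (if e.toProd.2 = u then (1:Quaternion ℝ) else 0) *
        (if e.toProd.2 = u then q e.symm else 0) = if e.toProd.2 = u then q e.symm else 0 := by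
      intro e; split_ifs <;> simp
    rw [Finset.sum_congr rfl fun e _ => this e]
    apply Fintype.sum_equiv ⟨SimpleGraph.Dart.symm, SimpleGraph.Dart.symm,
      SimpleGraph.Dart.symm_symm, SimpleGraph.Dart.symm_symm⟩
    intro e
    simp [SimpleGraph.Dart.symm_toProd]
  · rw [Matrix.diagonal_apply_ne _ huv]
    apply Finset.sum_eq_zero
    intro e _
    split_ifs with h1 h2
    · exact absurd (h1 ▸ h2) huv
    · simp
    · simp
    · simp

lemma arcInv_sq : quatArcInvMatrix G * quatArcInvMatrix G = 1 := by
  apply Matrix.ext; intro e f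
  simp only [Matrix.mul_apply, quatArcInvMatrix]
  rw [Finset.sum_congr rfl (fun g _ => by
    rw [ite_mul, one_mul, zero_mul] :
      ∀ g ∈ Finset.univ, (if g = e.symm then (1:Quaternion ℝ) else 0) *
        (if f = g.symm then (1:Quaternion ℝ) else 0)
        = if g = e.symm then (if f = g.symm then (1:Quaternion ℝ) else 0) else 0)]
  rw [Finset.sum_ite_eq']
  simp only [Finset.mem_univ, if_true, SimpleGraph.Dart.symm_symm, Matrix.one_apply]
  by_cases h : e = f
  · subst h; simp
  · rw [if_neg h, if_neg fun hh => h hh.symm]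

end GraphIds

/-- for every λ ∈ ℂ,
det(λI_{4m} − ψ(U)) = (λ²−1)^{2m−2n}·det(λ²I_{2n} − λψ(ᵀW) + ψ(D_w) − I_{2n})
(stated multiplied through by (λ²−1)^{2n} to avoid negative exponents). -/
theorem quat_walk_char_poly [Fintype V] [DecidableEq V] (G : SimpleGraph V)
    [DecidableRel G.Adj] (hG : G.Connected) (n m : ℕ) (hn : n = Fintype.card V)
    (hm : m = G.edgeFinset.card) (q : G.Dart → Quaternion ℝ) :
    ∀ lam : ℂ,
      (lam ^ 2 - 1) ^ (2 * n) *
          (lam • (1 : Matrix (G.Dart ⊕ G.Dart) (G.Dart ⊕ G.Dart) ℂ) -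
            psi (quatTransition G q)).det =
        (lam ^ 2 - 1) ^ (2 * m) *
          (lam ^ 2 • (1 : Matrix (V ⊕ V) (V ⊕ V) ℂ) -
            lam • psi ((quatWeightMatrix G q)ᵀ) + psi (quatDegMatrix G q) - 1).det := by
  intro lam
  classical
  have hnV : Nonempty V := hG.nonempty
  have hn1 : 0 < n := by rw [hn]; exact Fintype.card_pos
  have hcardD : Fintype.card G.Dart = 2 * m := by
    rw [hm]; exact G.dart_card_eq_twice_card_edges
  by_cases hne : lam ^ 2 - 1 = 0
  · rw [hne, zero_pow (by omega : 2 * n ≠ 0), zero_mul]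
    by_cases hm0 : m = 0
    · have hE : IsEmpty G.Dart := Fintype.card_eq_zero_iff.mp (by rw [hcardD, hm0, mul_zero])
      have hW0 : quatWeightMatrix G q = 0 := by
        apply Matrix.ext; intro u v
        simp only [quatWeightMatrix, Matrix.zero_apply]
        rw [dif_neg fun h => hE.elim ⟨(u, v), h⟩]
      have hD0 : quatDegMatrix G q = 0 := by
        apply Matrix.ext; intro u v
        have huniv : (Finset.univ : Finset G.Dart) = ∅ := Finset.univ_eq_empty
        simp [quatDegMatrix, Matrix.diagonal, huniv]
      have hRHS : lam ^ 2 • (1 : Matrix (V ⊕ V) (V ⊕ V) ℂ) -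
          lam • psi ((quatWeightMatrix G q)ᵀ) + psi (quatDegMatrix G q) - 1 = 0 := by
        rw [hW0, hD0, Matrix.transpose_zero, psi_zero, smul_zero, sub_zero, add_zero]
        rw [show lam ^ 2 • (1 : Matrix (V ⊕ V) (V ⊕ V) ℂ) - 1 = (lam ^ 2 - 1) • 1 by
          rw [sub_smul, one_smul]]
        rw [hne, zero_smul]
      rw [hRHS, Matrix.det_zero, mul_zero]
    · rw [zero_pow (by omega : 2 * m ≠ 0), zero_mul]
  · have hJ1 : psi (quatArcInvMatrix G) * psi (quatArcInvMatrix G) = 1 := by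
      rw [← psi_mul, arcInv_sq, psi_one]
    have hα : Fintype.card (G.Dart ⊕ G.Dart) = Fintype.card G.Dart + Fintype.card G.Dart :=
      Fintype.card_sum
    have key := core_det (psi (quatKMatrix G q)) (psi ((quatLMatrix G)ᵀ))
      (psi (quatArcInvMatrix G)) lam (Fintype.card G.Dart) hJ1 hα
      (det_psi_arcInv G lam) hne
    have hUU : psi (quatKMatrix G q) * psi ((quatLMatrix G)ᵀ) - psi (quatArcInvMatrix G) =
        psi (quatTransition G q) := by
      rw [← psi_mul, ← psi_sub, ← transition_eq]
    have hWW : psi ((quatLMatrix G)ᵀ) * psi (quatKMatrix G q) =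
        psi ((quatWeightMatrix G q)ᵀ) := by
      rw [← psi_mul, weight_eq]
    have hDD : psi ((quatLMatrix G)ᵀ) * (psi (quatArcInvMatrix G) * psi (quatKMatrix G q)) =
        psi (quatDegMatrix G q) := by
      rw [← psi_mul, ← psi_mul, deg_eq]
    rw [hUU, hWW, hDD] at key
    have hcardVV : Fintype.card (V ⊕ V) = 2 * n := by
      rw [Fintype.card_sum, hn]; ring
    rw [hcardVV, hcardD] at key
    have hmx : (lam ^ 2 - 1) • (1 : Matrix (V ⊕ V) (V ⊕ V) ℂ) -
        lam • psi ((quatWeightMatrix G q)ᵀ) + psi (quatDegMatrix G q) =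
        lam ^ 2 • (1 : Matrix (V ⊕ V) (V ⊕ V) ℂ) -
          lam • psi ((quatWeightMatrix G q)ᵀ) + psi (quatDegMatrix G q) - 1 := by
      rw [sub_smul, one_smul]; abel
    rw [hmx] at key
    exact key
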